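/- Let α>1, β>0, and let ψ(x) = 1/(π(x+i)²) be the Lusin wavelet. Then the continuous wavelet transform W_ψ R_{α,β}(a,b) = ∫_ℝ R_{α,β}(x) (1/a) conj(ψ)((x−b)/a) dx satisfies W_ψ R_{α,β}(a,b) = i a π ∑_{n=1}^∞ e^{iπ n^β (b+ia)} n^{β−α} for all a>0, b ∈ ℝ. -/

import Mathlib

open Real Complex MeasureTheory

noncomputable def R (α β x : ℝ) : ℝ :=
  ∑' n : ℕ, Real.sin (Real.pi * ((n : ℝ) + 1) ^ β * x) / ((n : ℝ) + 1) ^ α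

noncomputable def lusin (x : ℝ) : ℂ := 1 / (Real.pi * ((x : ℂ) + Complex.I) ^ 2)

open Set Filter FourierTransform
open scoped Topology

lemma lap_integrable {s : ℂ} (hs : 0 < s.re) :
    IntegrableOn (fun t : ℝ => (t : ℂ) * Complex.exp (-(s * t))) (Ioi 0) := by
  have h : IntegrableOn (fun t : ℝ => t * Real.exp (-(s.re * t))) (Ioi 0) := by
    have := integrableOn_rpow_mul_exp_neg_mul_rpow (p := 1) (s := 1) (b := s.re)
      (by norm_num) zero_lt_one hs
    refine this.congr_fun (fun t ht => ?_) measurableSet_Ioi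
    simp [Real.rpow_one]
  refine (h.norm.mono' ?_ ?_)
  · exact (Complex.continuous_ofReal.mul (Complex.continuous_exp.comp
      (by continuity))).aestronglyMeasurable.restrict
  · filter_upwards [ae_restrict_mem measurableSet_Ioi] with t ht
    rw [norm_mul, Complex.norm_exp]
    have hre : (-(s * (t:ℂ))).re = -(s.re * t) := by simp
    rw [hre, Real.norm_eq_abs, abs_mul, _root_.abs_of_nonneg (Real.exp_nonneg _)]
    simp only [Complex.norm_real, Real.norm_eq_abs]
    exact le_rfl

lemma aux_tendsto {r : ℝ} (hr : 0 < r) (c1 c2 : ℝ) :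
    Tendsto (fun t : ℝ => (c1 * t + c2) * Real.exp (-(r * t))) atTop (𝓝 0) := by
  have A : Tendsto (fun t : ℝ => t * Real.exp (-t)) atTop (𝓝 0) := by
    simpa using Real.tendsto_pow_mul_exp_neg_atTop_nhds_zero 1
  have hrt : Tendsto (fun t : ℝ => r * t) atTop atTop :=
    Tendsto.const_mul_atTop hr tendsto_id
  have B : Tendsto (fun t : ℝ => (r * t) * Real.exp (-(r * t))) atTop (𝓝 0) := A.comp hrt
  have C : Tendsto (fun t : ℝ => Real.exp (-(r * t))) atTop (𝓝 0) :=
    Real.tendsto_exp_neg_atTop_nhds_zero.comp hrt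
  have := ((B.const_mul (c1 / r)).add (C.const_mul c2))
  simp only [mul_zero, add_zero] at this
  refine this.congr (fun t => ?_)
  field_simp

lemma laplace_t {s : ℂ} (hs : 0 < s.re) :
    ∫ t in Ioi (0:ℝ), (t : ℂ) * Complex.exp (-(s * t)) = 1 / s ^ 2 := by
  have hs0 : s ≠ 0 := fun h => by simp [h] at hs
  set F : ℝ → ℂ := fun t => -((t / s) + 1 / s ^ 2) * Complex.exp (-(s * t)) with hF
  have hderiv : ∀ t : ℝ, HasDerivAt F ((t : ℂ) * Complex.exp (-(s * t))) t := by
    intro t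
    have h1 : HasDerivAt (fun t : ℝ => -((↑t / s) + 1 / s ^ 2)) (-(1/s)) t := by
      have := ((Complex.ofRealCLM.hasDerivAt (x := t)).div_const s).add_const (1 / s ^ 2)
      convert this.neg using 1
      rfl
      funext x
      all_goals simp
    have h2 : HasDerivAt (fun t : ℝ => Complex.exp (-(s * t))) (-s * Complex.exp (-(s*t))) t := by
      have hi : HasDerivAt (fun t : ℝ => -(s * (t:ℂ))) (-s) t := by
        convert ((Complex.ofRealCLM.hasDerivAt (x := t)).const_mul s).neg using 1
        rfl
        funext x
        all_goals simp
      convert (Complex.hasDerivAt_exp _).comp t hi using 1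
      rfl
      rfl
      ring
    have := h1.mul h2
    convert this using 1
    rfl
    rfl
    field_simp
    ring
  have htend : Tendsto F atTop (𝓝 0) := by
    apply squeeze_zero_norm' (a := fun t => (‖(1:ℂ)/s‖ * t + ‖1/s^2‖) * Real.exp (-(s.re * t)))
    · filter_upwards [eventually_ge_atTop (0:ℝ)] with t ht
      rw [hF]
      simp only [norm_mul, norm_neg]
      rw [Complex.norm_exp]
      have : (-(s * (t:ℂ))).re = -(s.re * t) := by simp
      rw [this]
      gcongr
      calc ‖(t:ℂ)/s + 1/s^2‖ ≤ ‖(t:ℂ)/s‖ + ‖1/s^2‖ := norm_add_le _ _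
        _ = ‖(1:ℂ)/s‖ * t + ‖1/s^2‖ := by
            rw [div_eq_mul_one_div, norm_mul, Complex.norm_real, Real.norm_eq_abs,
              _root_.abs_of_nonneg ht, mul_comm]
    · exact aux_tendsto hs _ _
  have key := integral_Ioi_of_hasDerivAt_of_tendsto' (a := 0) (f := F)
    (f' := fun t => (t : ℂ) * Complex.exp (-(s * t)))
    (fun x _ => hderiv x) (lap_integrable hs) htend
  rw [key, hF]
  simp




noncomputable def hfun (z : ℂ) : ℝ → ℂ :=
  fun t => ((max t 0 : ℝ) : ℂ) * Complex.exp (Complex.I * t * z)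

lemma hfun_eq_indicator (z : ℂ) :
    hfun z = Set.indicator (Set.Ioi 0)
      (fun t : ℝ => (t : ℂ) * Complex.exp (Complex.I * t * z)) := by
  funext t
  by_cases ht : 0 < t
  · simp [hfun, Set.indicator_of_mem (mem_Ioi.mpr ht), max_eq_left ht.le]
  · push_neg at ht
    rw [Set.indicator_of_notMem (by simpa using ht)]
    simp [hfun, max_eq_right ht]

lemma hfun_integrable {z : ℂ} (hz : 0 < z.im) : Integrable (hfun z) := by
  rw [hfun_eq_indicator, integrable_indicator_iff measurableSet_Ioi]
  have h := lap_integrable (s := -(Complex.I * z)) (by simpa using hz)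
  refine h.congr_fun (fun t ht => ?_) measurableSet_Ioi
  congr 1
  ring_nf

lemma hfun_cont (z : ℂ) : Continuous (hfun z) := by
  apply Continuous.mul
  · exact Complex.continuous_ofReal.comp (continuous_id.max continuous_const)
  · exact Complex.continuous_exp.comp (by continuity)

lemma fourier_hfun {z : ℂ} (hz : 0 < z.im) (ξ : ℝ) :
    𝓕 (hfun z) ξ = -((2 * (π:ℂ) * ξ - z) ^ 2)⁻¹ := by
  rw [Real.fourier_real_eq_integral_exp_smul]
  simp_rw [smul_eq_mul, hfun_eq_indicator z]
  rw [show (fun v : ℝ => Complex.exp (↑(-2 * π * v * ξ) * Complex.I) *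
      Set.indicator (Set.Ioi 0) (fun t : ℝ => (t : ℂ) * Complex.exp (Complex.I * t * z)) v)
    = Set.indicator (Set.Ioi 0) (fun v : ℝ =>
        (v : ℂ) * Complex.exp (-((Complex.I * (2 * (π:ℂ) * ξ - z)) * v))) from ?_]
  · rw [integral_indicator measurableSet_Ioi,
      laplace_t (s := Complex.I * (2 * (π:ℂ) * ξ - z)) (by simp [hz])]
    have hI : (Complex.I * (2 * (π:ℂ) * ξ - z)) ^ 2 = -((2 * (π:ℂ) * ξ - z) ^ 2) := by
      ring_nf
      simp [Complex.I_sq]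
      ring
    rw [hI]
    rw [one_div, inv_neg]
  · funext v
    by_cases hv : v ∈ Set.Ioi (0:ℝ)
    · rw [Set.indicator_of_mem hv, Set.indicator_of_mem hv]
      rw [mul_comm, mul_assoc]
      congr 1
      rw [← Complex.exp_add]
      congr 1
      push_cast
      ring
    · rw [Set.indicator_of_notMem hv, Set.indicator_of_notMem hv, mul_zero]

lemma integrable_aux {c d : ℝ} (hd : d ≠ 0) :
    Integrable (fun x : ℝ => ((x - c) ^ 2 + d ^ 2)⁻¹) := by
  have h1 : Integrable (fun x : ℝ => (1 + ((x - c)/d) ^ 2)⁻¹) := by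
    have := (integrable_inv_one_add_sq.comp_div hd)
    simpa [sub_eq_add_neg] using this.comp_add_right (-c)
  have := h1.const_mul ((d^2)⁻¹)
  refine this.congr (Filter.Eventually.of_forall (fun x => ?_))
  field_simp
  try ring

lemma fourier_hfun_integrable {z : ℂ} (hz : 0 < z.im) : Integrable (𝓕 (hfun z)) := by
  have hint : Integrable (fun ξ : ℝ => ((2*π*ξ - z.re) ^ 2 + z.im ^ 2)⁻¹) :=
    (integrable_aux (c := z.re) (d := z.im) hz.ne').comp_mul_left' (by positivity)
  have hne : ∀ ξ : ℝ, (2 * (π:ℂ) * ξ - z) ≠ 0 := by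
    intro ξ h
    have h2 := congrArg Complex.im h
    simp at h2
    exact hz.ne' h2
  have heq : 𝓕 (hfun z) = fun ξ : ℝ => -((2 * (π:ℂ) * ξ - z) ^ 2)⁻¹ :=
    funext (fourier_hfun hz)
  rw [heq]
  refine hint.mono' ?_ ?_
  · refine Continuous.aestronglyMeasurable ?_
    refine Continuous.neg (Continuous.inv₀ (by continuity) ?_)
    exact fun ξ => pow_ne_zero _ (hne ξ)
  · filter_upwards with ξ
    rw [norm_neg, norm_inv, norm_pow, Complex.sq_norm,
      Complex.normSq_apply]
    have h1 : (2 * (π:ℂ) * ξ - z).re = 2 * π * ξ - z.re := by simp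
    have h2 : (2 * (π:ℂ) * ξ - z).im = -z.im := by simp
    rw [h1, h2]
    have : (2 * π * ξ - z.re) * (2 * π * ξ - z.re) + -z.im * -z.im
        = (2 * π * ξ - z.re) ^ 2 + z.im ^ 2 := by ring
    rw [this]


lemma inversion {z : ℂ} (hz : 0 < z.im) (t : ℝ) :
    (∫ ξ : ℝ, Complex.exp (↑(2 * π * ξ * t) * Complex.I) *
      (-((2 * (π:ℂ) * ξ - z) ^ 2)⁻¹)) = hfun z t := by
  have h := (hfun_integrable hz).fourierInv_fourier_eq (fourier_hfun_integrable hz)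
    ((hfun_cont z).continuousAt (x := t))
  rw [Real.fourierInv_eq_fourier_neg,
    Real.fourier_real_eq_integral_exp_smul] at h
  rw [← h]
  refine integral_congr_ae (Filter.Eventually.of_forall (fun ξ => ?_))
  simp only [smul_eq_mul]
  rw [fourier_hfun hz]
  have harg : (-2 * π * ξ * -t : ℝ) = 2 * π * ξ * t := by ring
  rw [harg]

lemma key_integral {z : ℂ} (hz : 0 < z.im) (t : ℝ) :
    (∫ x : ℝ, Complex.exp (↑(x * t) * Complex.I) * (((x:ℂ) - z) ^ 2)⁻¹)
      = -(2 * π) * hfun z t := by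
  have h := inversion hz t
  set g : ℝ → ℂ := fun x => Complex.exp (↑(x * t) * Complex.I) * (-(((x:ℂ) - z) ^ 2)⁻¹) with hg
  have hchg := MeasureTheory.Measure.integral_comp_mul_left (g := g) (2 * π)
  have hA : (∫ x : ℝ, g (2 * π * x)) = hfun z t := by
    rw [← h]
    refine integral_congr_ae (Filter.Eventually.of_forall (fun ξ => ?_))
    simp only [hg]
    push_cast
    ring_nf
  have habs : |(2*π)⁻¹| = (2*π)⁻¹ := abs_of_pos (by positivity)
  rw [hchg, habs] at hA
  have hg2 : (∫ y : ℝ, g y)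
      = -∫ x : ℝ, Complex.exp (↑(x * t) * Complex.I) * (((x:ℂ) - z) ^ 2)⁻¹ := by
    rw [← integral_neg]
    refine integral_congr_ae (Filter.Eventually.of_forall (fun x => ?_))
    simp [hg]
  rw [hg2] at hA
  rw [← hA, Complex.real_smul]
  push_cast
  have hπ : ((π:ℂ)) ≠ 0 := Complex.ofReal_ne_zero.mpr Real.pi_ne_zero
  field_simp
  try ring
  congr 1
  funext x
  ring






lemma sub_z_ne {z : ℂ} (hz : 0 < z.im) (x : ℝ) : ((x:ℂ) - z) ≠ 0 := by
  intro h
  have := congrArg Complex.im h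
  simp at this
  exact hz.ne' this

lemma norm_inv_sq {z : ℂ} (hz : 0 < z.im) (x : ℝ) :
    ‖(((x:ℂ) - z) ^ 2)⁻¹‖ = ((x - z.re) ^ 2 + z.im ^ 2)⁻¹ := by
  rw [norm_inv, norm_pow, Complex.sq_norm, Complex.normSq_apply]
  have h1 : ((x:ℂ) - z).re = x - z.re := by simp
  have h2 : ((x:ℂ) - z).im = -z.im := by simp
  rw [h1, h2]
  congr 1
  ring

lemma exp_int {z : ℂ} (hz : 0 < z.im) (t : ℝ) :
    Integrable (fun x : ℝ => Complex.exp (↑(x * t) * Complex.I) * (((x:ℂ) - z) ^ 2)⁻¹) := by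
  refine (integrable_aux (c := z.re) (d := z.im) hz.ne').mono' ?_ ?_
  · refine Continuous.aestronglyMeasurable (Continuous.mul ?_ ?_)
    · exact Complex.continuous_exp.comp (by continuity)
    · exact Continuous.inv₀ (by continuity) (fun x => pow_ne_zero _ (sub_z_ne hz x))
  · filter_upwards with x
    rw [norm_mul, norm_inv_sq hz]
    have : ‖Complex.exp (↑(x * t) * Complex.I)‖ = 1 := Complex.norm_exp_ofReal_mul_I _
    rw [this, one_mul]

lemma hsin (θ : ℝ) : (Real.sin θ : ℂ)
    = (2 * Complex.I)⁻¹ * (Complex.exp (↑θ * Complex.I) - Complex.exp (-↑θ * Complex.I)) := by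
  rw [Complex.ofReal_sin, Complex.sin, mul_inv, Complex.inv_I]
  ring

lemma sine_int {z : ℂ} (hz : 0 < z.im) {c : ℝ} (hc : 0 < c) :
    (∫ x : ℝ, (Real.sin (π * c * x) : ℂ) * (((x:ℂ) - z) ^ 2)⁻¹)
      = Complex.I * (π:ℂ) ^ 2 * c * Complex.exp (Complex.I * π * c * z) := by
  have h1 := key_integral hz (π * c)
  have h2 := key_integral hz (-(π * c))
  have hπc : (0:ℝ) < π * c := mul_pos Real.pi_pos hc
  have e1 : hfun z (π * c) = ((π * c : ℝ) : ℂ) * Complex.exp (Complex.I * (π * c : ℝ) * z) := by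
    simp [hfun, max_eq_left hπc.le]
  have e2 : hfun z (-(π * c)) = 0 := by
    simp [hfun, max_eq_right (by linarith : -(π*c) ≤ 0)]
  rw [e1] at h1
  rw [e2, mul_zero] at h2
  calc (∫ x : ℝ, (Real.sin (π * c * x) : ℂ) * (((x:ℂ) - z) ^ 2)⁻¹)
      = ∫ x : ℝ, (2 * Complex.I)⁻¹ *
          ((fun x : ℝ => Complex.exp (↑(x * (π * c)) * Complex.I) * (((x:ℂ) - z) ^ 2)⁻¹) x
           - (fun x : ℝ => Complex.exp (↑(x * (-(π * c))) * Complex.I) * (((x:ℂ) - z) ^ 2)⁻¹) x)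
        := by
          refine integral_congr_ae (Filter.Eventually.of_forall (fun x => ?_))
          simp only [hsin]
          push_cast
          ring_nf
    _ = (2 * Complex.I)⁻¹ *
          ((∫ x : ℝ, Complex.exp (↑(x * (π * c)) * Complex.I) * (((x:ℂ) - z) ^ 2)⁻¹)
           - ∫ x : ℝ, Complex.exp (↑(x * (-(π * c))) * Complex.I) * (((x:ℂ) - z) ^ 2)⁻¹)
        := by rw [MeasureTheory.integral_const_mul, integral_sub (exp_int hz _) (exp_int hz _)]
    _ = Complex.I * (π:ℂ) ^ 2 * c * Complex.exp (Complex.I * π * c * z) := by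
          rw [h1, h2, sub_zero, mul_inv, Complex.inv_I]
          push_cast
          ring_nf










lemma kernel_eq {a b : ℝ} (ha : 0 < a) (x : ℝ) :
    (1 / (a:ℂ)) * (starRingEnd ℂ) (lusin ((x - b) / a))
      = (a:ℂ) / π * (((x:ℂ) - ((b:ℂ) + Complex.I * a)) ^ 2)⁻¹ := by
  have hπ : ((π:ℝ):ℂ) ≠ 0 := Complex.ofReal_ne_zero.mpr Real.pi_ne_zero
  have ha' : ((a:ℝ):ℂ) ≠ 0 := Complex.ofReal_ne_zero.mpr ha.ne'
  have hden2 : ((x:ℂ) - ((b:ℂ) + Complex.I * a)) ≠ 0 := by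
    intro h
    have := congrArg Complex.im h
    simp at this
    first | exact ha.ne' this | exact ha.ne' this.symm
  unfold lusin
  rw [map_div₀, map_one, map_mul, map_pow, map_add, Complex.conj_ofReal,
    Complex.conj_ofReal, Complex.conj_I]
  have hq : ((((x - b) / a : ℝ)):ℂ) - Complex.I
      = ((x:ℂ) - ((b:ℂ) + Complex.I * a)) / a := by
    push_cast
    field_simp
    ring
  rw [← sub_eq_add_neg, hq, div_pow]
  have hX2 : ((x:ℂ) - ((b:ℂ) + Complex.I * a)) ^ 2 ≠ 0 := pow_ne_zero _ hden2
  field_simp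

theorem stmt_15 (α β : ℝ) (hα : 1 < α) (hβ : 0 < β) :
    ∀ a > (0 : ℝ), ∀ b : ℝ,
      (∫ x : ℝ, (R α β x : ℂ) * (1 / (a : ℂ)) * (starRingEnd ℂ) (lusin ((x - b) / a))) =
        Complex.I * a * Real.pi *
          ∑' n : ℕ, Complex.exp (Complex.I * Real.pi * (((n : ℝ) + 1) ^ β : ℝ) *
              ((b : ℂ) + Complex.I * a)) * ((((n : ℝ) + 1) ^ (β - α) : ℝ) : ℂ) := by
  intro a ha b
  have hπ : (0:ℝ) < π := Real.pi_pos
  set z : ℂ := (b:ℂ) + Complex.I * a with hzdef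
  have hzim : 0 < z.im := by simp [hzdef, ha]
  have hzre : z.re = b := by simp [hzdef]
  have hzim' : z.im = a := by simp [hzdef]
  set c : ℕ → ℝ := fun n => ((n:ℝ) + 1) ^ β with hc
  have hcpos : ∀ n, 0 < c n := fun n => Real.rpow_pos_of_pos (by positivity) β
  have hnpos : ∀ n : ℕ, (0:ℝ) < ((n:ℝ) + 1) ^ α := fun n => Real.rpow_pos_of_pos (by positivity) α
  set F : ℕ → ℝ → ℂ := fun n x => (Real.sin (π * c n * x) : ℂ)
      * (((((n:ℝ) + 1) ^ α : ℝ)) : ℂ)⁻¹ * ((a:ℂ) / π * (((x:ℂ) - z) ^ 2)⁻¹) with hF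
  -- pointwise identity
  have hpt : ∀ x : ℝ, (R α β x : ℂ) * (1 / (a:ℂ)) * (starRingEnd ℂ) (lusin ((x - b) / a))
      = ∑' n : ℕ, F n x := by
    intro x
    rw [mul_assoc, kernel_eq ha x, R, Complex.ofReal_tsum, ← tsum_mul_right]
    refine tsum_congr (fun n => ?_)
    rw [hF]
    push_cast
    simp only [hzdef, hc]
    ring_nf
  -- integrability
  have hK : Integrable (fun x : ℝ => ((x - b) ^ 2 + a ^ 2)⁻¹) := integrable_aux ha.ne'
  have hnormF : ∀ n x, ‖F n x‖
      ≤ ((((n:ℝ) + 1) ^ α)⁻¹ * (a / π)) * ((x - b) ^ 2 + a ^ 2)⁻¹ := by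
    intro n x
    rw [hF]
    simp only [norm_mul]
    rw [norm_inv_sq hzim, hzre, hzim']
    have h1 : ‖((Real.sin (π * c n * x) : ℝ) : ℂ)‖ ≤ 1 := by
      rw [Complex.norm_real, Real.norm_eq_abs]
      exact abs_sin_le_one _
    have h2 : ‖((((((n:ℝ) + 1) ^ α : ℝ)) : ℂ))⁻¹‖ = ((((n:ℝ) + 1) ^ α))⁻¹ := by
      rw [norm_inv, Complex.norm_real, Real.norm_eq_abs, abs_of_pos (hnpos n)]
    have h3 : ‖((a:ℂ) / (π:ℂ))‖ = a / π := by
      rw [← Complex.ofReal_div, Complex.norm_real, Real.norm_eq_abs,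
        abs_of_pos (by positivity)]
    rw [h2, h3]
    calc ‖((Real.sin (π * c n * x) : ℝ) : ℂ)‖ * ((((n:ℝ) + 1) ^ α))⁻¹
          * (a / π * ((x - b) ^ 2 + a ^ 2)⁻¹)
        ≤ 1 * ((((n:ℝ) + 1) ^ α))⁻¹ * (a / π * ((x - b) ^ 2 + a ^ 2)⁻¹) := by
          gcongr
      _ = ((((n:ℝ) + 1) ^ α)⁻¹ * (a / π)) * ((x - b) ^ 2 + a ^ 2)⁻¹ := by ring
  have hIntF : ∀ n, Integrable (F n) := by
    intro n
    refine (hK.const_mul ((((n:ℝ) + 1) ^ α)⁻¹ * (a / π))).mono' ?_ ?_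
    · rw [hF]
      refine Continuous.aestronglyMeasurable ?_
      refine ((Continuous.mul ?_ continuous_const).mul
        (continuous_const.mul (Continuous.inv₀ (by continuity)
          (fun x => pow_ne_zero _ (sub_z_ne hzim x)))))
      exact Complex.continuous_ofReal.comp (Real.continuous_sin.comp (by continuity))
    · filter_upwards with x
      exact hnormF n x
  have hsummable : Summable (fun n : ℕ => (((n:ℝ) + 1) ^ α)⁻¹) := by
    have h0 := Real.summable_nat_rpow_inv.mpr hα
    have h2 := (summable_nat_add_iff 1).mpr h0
    refine h2.congr (fun n => ?_)
    push_cast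
    ring_nf
  have hsumInt : Summable (fun n : ℕ => ∫ x : ℝ, ‖F n x‖) := by
    set M : ℝ := ∫ x : ℝ, ((x - b) ^ 2 + a ^ 2)⁻¹ with hM
    refine Summable.of_nonneg_of_le
      (fun n => integral_nonneg (fun x => norm_nonneg _))
      (fun n => ?_) (((hsummable.mul_right (a / π)).mul_right M))
    calc (∫ x : ℝ, ‖F n x‖)
        ≤ ∫ x : ℝ, ((((n:ℝ) + 1) ^ α)⁻¹ * (a / π)) * ((x - b) ^ 2 + a ^ 2)⁻¹ :=
          integral_mono (hIntF n).norm
            (hK.const_mul _) (fun x => hnormF n x)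
      _ = (((n:ℝ) + 1) ^ α)⁻¹ * (a / π) * M := by
          rw [MeasureTheory.integral_const_mul]
  -- swap
  have hswap := MeasureTheory.integral_tsum_of_summable_integral_norm hIntF hsumInt
  calc (∫ x : ℝ, (R α β x : ℂ) * (1 / (a:ℂ)) * (starRingEnd ℂ) (lusin ((x - b) / a)))
      = ∫ x : ℝ, ∑' n : ℕ, F n x :=
        integral_congr_ae (Filter.Eventually.of_forall hpt)
    _ = ∑' n : ℕ, ∫ x : ℝ, F n x := hswap.symm
    _ = Complex.I * a * Real.pi * ∑' n : ℕ, Complex.exp (Complex.I * Real.pi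
          * (((n : ℝ) + 1) ^ β : ℝ) * ((b : ℂ) + Complex.I * a))
          * ((((n : ℝ) + 1) ^ (β - α) : ℝ) : ℂ) := by
        rw [← tsum_mul_left]
        refine tsum_congr (fun n => ?_)
        have hterm : (∫ x : ℝ, F n x)
            = ((((n:ℝ) + 1) ^ α : ℝ) : ℂ)⁻¹ * ((a:ℂ) / π)
              * ∫ x : ℝ, (Real.sin (π * c n * x) : ℂ) * (((x:ℂ) - z) ^ 2)⁻¹ := by
          rw [← MeasureTheory.integral_const_mul]
          refine integral_congr_ae (Filter.Eventually.of_forall (fun x => ?_))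
          rw [hF]
          ring
        rw [hterm, sine_int hzim (hcpos n)]
        rw [hc]
        have hsub : ((n:ℝ) + 1) ^ (β - α) = ((n:ℝ) + 1) ^ β / ((n:ℝ) + 1) ^ α :=
          Real.rpow_sub (by positivity) _ _
        rw [hsub]
        push_cast
        have hπc : ((π:ℝ):ℂ) ≠ 0 := Complex.ofReal_ne_zero.mpr Real.pi_ne_zero
        have hαc : ((((n:ℝ) + 1) ^ α : ℝ) : ℂ) ≠ 0 := Complex.ofReal_ne_zero.mpr (hnpos n).ne'
        simp only [hzdef]
        field_simp
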